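/- arXiv:2602.18768 — 3 statements merged into one kernel-verified Lean document; each statement's English description precedes it below -/
import Mathlib

section
/- Let G be a finite directed graph and p a non-extendable simple path whose vertices do not all lie in one SCC. If (SC_{t_1}, ..., SC_{t_l}) is the sequence of SCCs visited by p (as contiguous segments, in order), then every in-neighbor of the first vertex of p lies in V(p) ∩ SC_{t_1}, and every out-neighbor of the last vertex of p lies in V(p) ∩ SC_{t_l}. -/
variable {V : Type*}

/-- Reachability: there is a directed path (possibly trivial) from `u` to `v`. -/
def Reach (E : V → V → Prop) : V → V → Prop := Relation.ReflTransGen E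

/-- Mutual reachability. -/
def MutReach (E : V → V → Prop) (u v : V) : Prop := Reach E u v ∧ Reach E v u

/-- The strongly connected component of `v`, as a vertex set. -/
def SCCOf (E : V → V → Prop) (v : V) : Set V := {w | MutReach E v w}

/-- `C` is (the vertex set of) a strongly connected component of the graph. -/
def IsSCC (E : V → V → Prop) (C : Set V) : Prop := ∃ v, C = SCCOf E v

/-- Edge relation of the condensation `Comp(G)`. -/
def CompEdge (E : V → V → Prop) (C D : Set V) : Prop :=
  IsSCC E C ∧ IsSCC E D ∧ C ≠ D ∧ ∃ a ∈ C, ∃ b ∈ D, E a b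

/-- A simple path: nonempty vertex list, pairwise distinct, consecutive pairs are edges. -/
def SimplePath (E : V → V → Prop) (p : List V) : Prop :=
  p ≠ [] ∧ p.Nodup ∧ p.Chain' E

/-- A simple cycle `(v₁,…,vₙ,v₁)`, represented by the open list `(v₁,…,vₙ)`
together with the closing edge `(vₙ,v₁)`. -/
def SimpleCycle (E : V → V → Prop) (p : List V) : Prop :=
  ∃ h : p ≠ [], p.Nodup ∧ p.Chain' E ∧ E (p.getLast h) (p.head h)

/-- Forward extendability of a simple path. -/
def FwdExt (E : V → V → Prop) (p : List V) : Prop :=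
  ∃ w, SimplePath E (p ++ [w]) ∨ SimpleCycle E (p ++ [w])

/-- Backward extendability of a simple path. -/
def BwdExt (E : V → V → Prop) (p : List V) : Prop :=
  ∃ w, SimplePath E (w :: p) ∨ SimpleCycle E (w :: p)

def Extendable (E : V → V → Prop) (p : List V) : Prop := FwdExt E p ∨ BwdExt E p

/-- A prime path: a simple cycle or a non-extendable simple path. -/
def PrimePath (E : V → V → Prop) (p : List V) : Prop :=
  SimpleCycle E p ∨ (SimplePath E p ∧ ¬ Extendable E p)

private lemma reach_head_aux (E : V → V → Prop) :
    ∀ (p : List V) (h : p ≠ []), p.Chain' E → ∀ u ∈ p, Reach E (p.head h) u := by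
  intro p
  induction p with
  | nil => intro h; exact absurd rfl h
  | cons a t ih =>
    intro _ hc u hu
    rcases List.mem_cons.mp hu with rfl | hu
    · exact Relation.ReflTransGen.refl
    · have ht : t ≠ [] := List.ne_nil_of_mem hu
      rw [List.Chain', List.isChain_cons] at hc
      have h1 : E a (t.head ht) := hc.1 _ (List.head?_eq_head ht ▸ rfl)
      exact (Relation.ReflTransGen.single h1).trans (ih ht hc.2 u hu)

private lemma reach_last_aux (E : V → V → Prop) :
    ∀ (p : List V) (h : p ≠ []), p.Chain' E → ∀ u ∈ p, Reach E u (p.getLast h) := by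
  intro p
  induction p with
  | nil => intro h; exact absurd rfl h
  | cons a t ih =>
    intro _ hc u hu
    rw [List.Chain', List.isChain_cons] at hc
    rcases List.mem_cons.mp hu with rfl | hu
    · rcases List.eq_nil_or_concat t with rfl | _
      · exact Relation.ReflTransGen.refl
      · have ht : t ≠ [] := by rename_i h; rcases h with ⟨l, b, rfl⟩; simp
        have h1 : E u (t.head ht) := hc.1 _ (List.head?_eq_head ht ▸ rfl)
        have := ih ht hc.2 _ (List.head_mem ht)
        rw [List.getLast_cons ht]
        exact (Relation.ReflTransGen.single h1).trans this
    · have ht : t ≠ [] := List.ne_nil_of_mem hu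
      rw [List.getLast_cons ht]
      exact ih ht hc.2 u hu

/-- For a non-extendable simple path not contained in a single SCC, every in-neighbor of
the first vertex lies on the path and in the SCC of the first vertex, and every
out-neighbor of the last vertex lies on the path and in the SCC of the last vertex. -/
theorem stmt15 [Fintype V] (E : V → V → Prop) (p : List V) (hp : p ≠ [])
    (hsp : SimplePath E p) (hne : ¬ Extendable E p)
    (hnot : ¬ ∀ u ∈ p, ∀ w ∈ p, MutReach E u w) :
    (∀ u, E u (p.head hp) → u ∈ p ∧ MutReach E u (p.head hp)) ∧
    (∀ u, E (p.getLast hp) u → u ∈ p ∧ MutReach E u (p.getLast hp)) := by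
  obtain ⟨-, hnd, hch⟩ := hsp
  constructor
  · intro u hu
    have hmem : u ∈ p := by
      by_contra hnm
      apply hne
      right
      refine ⟨u, Or.inl ⟨List.cons_ne_nil _ _, List.nodup_cons.mpr ⟨hnm, hnd⟩, ?_⟩⟩
      rw [List.Chain', List.isChain_cons]
      exact ⟨fun x hx => by rw [List.head?_eq_head hp] at hx; exact (Option.some_injective _ hx) ▸ hu, hch⟩
    exact ⟨hmem, Relation.ReflTransGen.single hu, reach_head_aux E p hp hch u hmem⟩
  · intro u hu
    have hmem : u ∈ p := by
      by_contra hnm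
      apply hne
      left
      refine ⟨u, Or.inl ⟨by simp, ?_, ?_⟩⟩
      · simpa [List.nodup_append] using ⟨hnd, fun a ha (h : a = u) => hnm (h ▸ ha)⟩
      · rw [List.Chain', List.isChain_append]
        refine ⟨hch, List.isChain_singleton _, fun x hx y hy => ?_⟩
        rw [List.getLast?_eq_getLast hp] at hx
        simp only [List.head?_cons, Option.mem_some_iff] at hy
        exact (Option.some_injective _ hx) ▸ hy ▸ hu
    exact ⟨hmem, reach_last_aux E p hp hch u hmem, Relation.ReflTransGen.single hu⟩
end

section
/- Let G be a finite directed graph, let SC_{t_1}, ..., SC_{t_l} be distinct SCCs forming a simple path in the condensation Comp(G), and let p = (v_1, ..., v_n) be a path in G that visits exactly these SCCs in this order as contiguous segments, such that the restriction of p to each SC_{t_i} is a simple path, in(v_1) ⊆ V(p) ∩ SC_{t_1}, and out(v_n) ⊆ V(p) ∩ SC_{t_l}. Then p is a prime path of G (a non-extendable simple path). -/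
variable {V : Type*}

lemma scc_eq_of_mem {E : V → V → Prop} {C D : Set V} (hC : IsSCC E C) (hD : IsSCC E D)
    {x : V} (hxC : x ∈ C) (hxD : x ∈ D) : C = D := by
  obtain ⟨v, rfl⟩ := hC
  obtain ⟨w, rfl⟩ := hD
  obtain ⟨h1, h2⟩ := hxC
  obtain ⟨h3, h4⟩ := hxD
  ext y
  constructor
  · rintro ⟨a, b⟩; exact ⟨(h3.trans h2).trans a, b.trans (h1.trans h4)⟩
  · rintro ⟨a, b⟩; exact ⟨(h1.trans h4).trans a, b.trans (h3.trans h2)⟩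

/-- Sufficiency: a path that visits a simple path of distinct SCCs in the condensation as
contiguous segments, each segment simple, with `in(v₁) ⊆ V(p) ∩ SC_{t₁}` and
`out(vₙ) ⊆ V(p) ∩ SC_{t_l}`, is a non-extendable simple path (hence a prime path). -/
theorem stmt16 [Fintype V] (E : V → V → Prop) (p : List V) (hp : p ≠ [])
    (hc : p.Chain' E)
    (S : List (Set V)) (hS : S ≠ []) (segs : List (List V))
    (hjoin : segs.flatten = p) (hlen : segs.length = S.length)
    (hSCC : ∀ C ∈ S, IsSCC E C) (hnodupS : S.Nodup)
    (hchainS : S.Chain' (CompEdge E))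
    (hseg : ∀ q ∈ segs.zip S, q.1 ≠ [] ∧ q.1.Nodup ∧ ∀ v ∈ q.1, v ∈ q.2)
    (hin : ∀ u, E u (p.head hp) → u ∈ p ∧ u ∈ S.head hS)
    (hout : ∀ u, E (p.getLast hp) u → u ∈ p ∧ u ∈ S.getLast hS) :
    SimplePath E p ∧ ¬ Extendable E p := by
  have hzip : ∀ i (hi : i < segs.length), segs[i] ≠ [] ∧ segs[i].Nodup ∧
      ∀ v ∈ segs[i], v ∈ S[i]'(hlen ▸ hi) := by
    intro i hi
    have hi' : i < S.length := hlen ▸ hi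
    have hmem : (segs[i], S[i]) ∈ segs.zip S := by
      have : (segs.zip S)[i]'(by simp [List.length_zip]; omega) = (segs[i], S[i]) :=
        List.getElem_zip ..
      rw [← this]
      exact List.getElem_mem _
    exact hseg _ hmem
  have hnd : p.Nodup := by
    rw [← hjoin, List.nodup_flatten]
    constructor
    · intro l hl
      obtain ⟨i, hi, rfl⟩ := List.getElem_of_mem hl
      exact (hzip i hi).2.1
    · rw [List.pairwise_iff_getElem]
      intro i j hi hj hij v hv1 hv2
      have hvi := (hzip i hi).2.2 v hv1
      have hvj := (hzip j hj).2.2 v hv2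
      have hi' : i < S.length := hlen ▸ hi
      have hj' : j < S.length := hlen ▸ hj
      have heq : S[i] = S[j] :=
        scc_eq_of_mem (hSCC _ (List.getElem_mem _)) (hSCC _ (List.getElem_mem _)) hvi hvj
      have := (hnodupS.getElem_inj_iff).mp heq
      omega
  refine ⟨⟨hp, hnd, hc⟩, ?_⟩
  rintro (⟨w, hw⟩ | ⟨w, hw⟩)
  · have hnd' : (p ++ [w]).Nodup ∧ (p ++ [w]).Chain' E := by
      rcases hw with ⟨_, h1, h2⟩ | ⟨_, h1, h2, _⟩ <;> exact ⟨h1, h2⟩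
    have hE : E (p.getLast hp) w := by
      refine (List.isChain_append.mp hnd'.2).2.2 _ ?_ w (by simp)
      simp [List.getLast?_eq_getLast (l := p) hp]
    have hwp : w ∈ p := (hout w hE).1
    have := List.nodup_append'.mp hnd'.1
    exact this.2.2 hwp (by simp)
  · have hnd' : (w :: p).Nodup ∧ (w :: p).Chain' E := by
      rcases hw with ⟨_, h1, h2⟩ | ⟨_, h1, h2, _⟩ <;> exact ⟨h1, h2⟩
    have hE : E w (p.head hp) := by
      have := (List.isChain_cons.mp hnd'.2).1
      exact this _ (List.head?_eq_head hp)
    have hwp : w ∈ p := (hin w hE).1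
    exact (List.nodup_cons.mp hnd'.1).1 hwp
end

section
/- Let G be a SESE graph with entry s and exit t (in(s) = ∅, out(t) = ∅, and every vertex lies on some path from s to t). Then every prime path of G that is not a simple cycle and whose vertex set is not contained in a single nontrivial SCC either starts at s or starts at a vertex all of whose in-neighbors lie in its own SCC, and either ends at t or ends at a vertex all of whose out-neighbors lie in its own SCC. -/
variable {V : Type*}

private lemma head_reaches {E : V → V → Prop} :
    ∀ (p : List V) (hp : p ≠ []), p.Chain' E → ∀ u ∈ p,
      Relation.ReflTransGen E (p.head hp) u
  | [], hp, _, u, hu => absurd rfl hp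
  | [a], _, _, u, hu => by
      simp at hu; subst hu; exact Relation.ReflTransGen.refl
  | a :: b :: q, _, hc, u, hu => by
      rcases List.mem_cons.1 hu with rfl | hu
      · exact Relation.ReflTransGen.refl
      · have hab : E a b := (List.isChain_cons_cons.1 hc).1
        have := head_reaches (b :: q) (by simp) (List.isChain_cons_cons.1 hc).2 u hu
        exact Relation.ReflTransGen.head hab this

private lemma reaches_last {E : V → V → Prop} :
    ∀ (p : List V) (hp : p ≠ []), p.Chain' E → ∀ u ∈ p,
      Relation.ReflTransGen E u (p.getLast hp)
  | [], hp, _, u, hu => absurd rfl hp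
  | [a], _, _, u, hu => by
      simp at hu; subst hu; simp [Relation.ReflTransGen.refl]
  | a :: b :: q, _, hc, u, hu => by
      have hlast : (a :: b :: q).getLast (by simp) = (b :: q).getLast (by simp) := by
        simp [List.getLast]
      rw [hlast]
      rcases List.mem_cons.1 hu with rfl | hu
      · have hab : E u b := (List.isChain_cons_cons.1 hc).1
        have := reaches_last (b :: q) (by simp) (List.isChain_cons_cons.1 hc).2 b (by simp)
        exact Relation.ReflTransGen.head hab this
      · exact reaches_last (b :: q) (by simp) (List.isChain_cons_cons.1 hc).2 u hu

/-- In a SESE graph, every prime path that is not a simple cycle and whose vertex set is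
not contained in a single nontrivial SCC either starts at `s` or starts at a vertex all
of whose in-neighbors lie in its own SCC, and either ends at `t` or ends at a vertex all
of whose out-neighbors lie in its own SCC. -/
theorem stmt19 [Fintype V] (E : V → V → Prop) (s t : V) (hst : s ≠ t)
    (hs : ∀ u, ¬ E u s) (ht : ∀ u, ¬ E t u)
    (hsese : ∀ v : V, ∃ q : List V, q.Chain' E ∧ q.head? = some s ∧
      q.getLast? = some t ∧ v ∈ q)
    (p : List V) (hp : p ≠ []) (hprime : PrimePath E p)
    (hnotcyc : ¬ SimpleCycle E p)
    (hnotSCC : ¬ ∃ C : Set V, IsSCC E C ∧ (∃ a ∈ C, Relation.TransGen E a a) ∧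
      ∀ v ∈ p, v ∈ C) :
    (p.head hp = s ∨ ∀ u, E u (p.head hp) → MutReach E u (p.head hp)) ∧
    (p.getLast hp = t ∨ ∀ u, E (p.getLast hp) u → MutReach E u (p.getLast hp)) := by
  rcases hprime with hc | ⟨⟨_, hnd, hch⟩, hext⟩
  · exact absurd hc hnotcyc
  constructor
  · right
    intro u hu
    -- u must be in p, else p is backward extendable
    have humem : u ∈ p := by
      by_contra hum
      apply hext
      right
      exact ⟨u, Or.inl ⟨by simp, by simp [hnd, hum], by
        cases p with
        | nil => exact List.isChain_singleton u
        | cons a q =>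
            exact List.isChain_cons_cons.2 ⟨by simpa [List.head] using hu, hch⟩⟩⟩
    exact ⟨Relation.ReflTransGen.head hu Relation.ReflTransGen.refl,
      head_reaches p hp hch u humem⟩
  · right
    intro u hu
    have humem : u ∈ p := by
      by_contra hum
      apply hext
      left
      refine ⟨u, Or.inl ⟨by simp, ?_, ?_⟩⟩
      · simp [List.nodup_append, hnd, hum]
        intro a ha h; exact hum (h ▸ ha)
      · apply List.isChain_append.2
        refine ⟨hch, by simp, ?_⟩
        intro x hx y hy
        simp only [List.head?_cons, Option.mem_some_iff] at hy
        rw [List.getLast?_eq_getLast hp, Option.mem_some_iff] at hx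
        subst hy; subst hx
        exact hu
    exact ⟨reaches_last p hp hch u humem,
      Relation.ReflTransGen.head hu Relation.ReflTransGen.refl⟩
end
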